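/- arXiv:2106.06628 — 2 statements merged into one kernel-verified Lean document; each statement's English description precedes it below -/
import Mathlib

section
/- Let b > 0 and let x : ℝ → ℝ be a bounded differentiable function satisfying x'(t) ≥ −b x(t) for all t ∈ ℝ, i.e. x'(t) = q(t) − b x(t) with q(t) ≥ 0. Then x(t) ≥ 0 for all t ∈ ℝ. Moreover if q(t) > 0 whenever x(t) = 0, then x(t) > 0 for all t ∈ ℝ. -/
theorem stmt_12 (b : ℝ) (hb : 0 < b) (q x : ℝ → ℝ)
    (hq : ∀ t, 0 ≤ q t)
    (hx : ∀ t, HasDerivAt x (q t - b * x t) t)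
    (hbdd : ∃ Cb, ∀ t, |x t| ≤ Cb) :
    (∀ t, 0 ≤ x t) ∧ ((∀ t, x t = 0 → 0 < q t) → ∀ t, 0 < x t) := by
  obtain ⟨Cb, hCb⟩ := hbdd
  have hCb0 : 0 ≤ Cb := le_trans (abs_nonneg _) (hCb 0)
  set y : ℝ → ℝ := fun t => x t * Real.exp (b * t) with hy
  have hyd : ∀ t, HasDerivAt y (q t * Real.exp (b * t)) t := by
    intro t
    have he : HasDerivAt (fun t => Real.exp (b * t)) (Real.exp (b * t) * b) t := by
      simpa using ((hasDerivAt_id t).const_mul b).exp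
    have : HasDerivAt (fun t => x t * Real.exp (b * t)) ((q t - b * x t) * Real.exp (b * t) + x t * (Real.exp (b * t) * b)) t := (hx t).mul he
    convert this using 1
    ring
  have hmono : Monotone y := by
    apply monotone_of_deriv_nonneg
    · exact fun t => (hyd t).differentiableAt
    · intro t
      rw [(hyd t).deriv]
      exact mul_nonneg (hq t) (Real.exp_pos _).le
  have hnonneg : ∀ t, 0 ≤ x t := by
    intro u
    by_contra hneg
    push_neg at hneg
    set Y := x u * Real.exp (b * u) with hYdef
    have hY : Y < 0 := mul_neg_of_neg_of_pos hneg (Real.exp_pos _)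
    have hA : 0 < (Cb + 1) / (-Y) := div_pos (by linarith) (by linarith)
    set s : ℝ := min u (-(Real.log ((Cb + 1) / (-Y))) / b) with hs
    have hsu : s ≤ u := min_le_left _ _
    have hys : y s ≤ Y := hmono hsu
    have hslog : s ≤ -(Real.log ((Cb + 1) / (-Y))) / b := min_le_right _ _
    have hbs : Real.log ((Cb + 1) / (-Y)) ≤ -(b * s) := by
      have h1 := mul_le_mul_of_nonneg_left hslog hb.le
      have h2 : b * (-(Real.log ((Cb + 1) / (-Y))) / b) = -(Real.log ((Cb + 1) / (-Y))) := by
        field_simp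
      linarith
    have hexp : (Cb + 1) / (-Y) ≤ Real.exp (-(b * s)) := by
      calc (Cb + 1) / (-Y) = Real.exp (Real.log ((Cb + 1) / (-Y))) := (Real.exp_log hA).symm
        _ ≤ Real.exp (-(b * s)) := Real.exp_le_exp.mpr hbs
    -- x s ≤ Y * exp(-b s) ≤ -(Cb+1)
    have hxs : x s ≤ Y * Real.exp (-(b * s)) := by
      have : x s * Real.exp (b * s) ≤ Y := hys
      have h3 := mul_le_mul_of_nonneg_right this (Real.exp_pos (-(b * s))).le
      rw [mul_assoc, ← Real.exp_add] at h3
      simpa using h3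
    have hfinal : Y * Real.exp (-(b * s)) ≤ Y * ((Cb + 1) / (-Y)) :=
      mul_le_mul_of_nonpos_left hexp hY.le
    have hYA : Y * ((Cb + 1) / (-Y)) = -(Cb + 1) := by
      rw [mul_div_assoc', div_eq_iff (show (-Y) ≠ 0 by linarith)]; ring
    have h4 : x s ≤ -(Cb + 1) := by
      rw [hYA] at hfinal; linarith
    have := hCb s
    rw [abs_le] at this
    linarith [this.1]
  refine ⟨hnonneg, ?_⟩
  intro hstrict t
  rcases lt_or_eq_of_le (hnonneg t) with h | h
  · exact h
  · exfalso
    have hxt : x t = 0 := h.symm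
    have hd : 0 < q t - b * x t := by rw [hxt]; simpa using hstrict t hxt
    -- positive derivative at t forces x s < x t = 0 for some s < t
    have hslope := (hasDerivAt_iff_tendsto_slope.mp (hx t))
    have hslope' : Filter.Tendsto (slope x t) (nhdsWithin t (Set.Iio t)) (nhds (q t - b * x t)) :=
      hslope.mono_left (nhdsWithin_mono t (fun a ha => Set.mem_compl_singleton_iff.mpr (ne_of_lt ha)))
    have hev : ∀ᶠ s in nhdsWithin t (Set.Iio t), 0 < slope x t s :=
      hslope'.eventually (eventually_gt_nhds hd)
    obtain ⟨s, hpos, hst⟩ := (hev.and self_mem_nhdsWithin).exists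
    rw [slope_def_field] at hpos
    have hst' : s - t < 0 := sub_neg.mpr hst
    have : x s - x t < 0 := by
      by_contra hcon
      push_neg at hcon
      have : (x s - x t) / (s - t) ≤ 0 := div_nonpos_of_nonneg_of_nonpos hcon hst'.le
      linarith
    rw [hxt] at this
    linarith [hnonneg s]
end

section
/- Let v : ℝ → ℝ be continuously differentiable with v(y) ≥ v_min > 0 for all y, a > 0, r > a/v_min, and define δ : C([-r,0],ℝ) → (0,r) by the condition a = ∫_{-δ(φ)}^{0} v(φ(s)) ds. If φ is constant with value ξ, then the directional derivative of δ at φ in direction χ ∈ C([-r,0],ℝ) equals −(v'(ξ)/v(ξ)) ∫_{-a/v(ξ)}^{0} χ(s) ds. -/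
open Filter Topology MeasureTheory

lemma mvt_aux (v : ℝ → ℝ) (hv : ContDiff ℝ 1 v) (ξ η ε' : ℝ)
    (hcl : ∀ c, |c - ξ| ≤ η → |deriv v c - deriv v ξ| ≤ ε') :
    ∀ u, |u| ≤ η → |v (ξ + u) - v ξ - deriv v ξ * u| ≤ ε' * |u| := by
  intro u hu
  have hη0 : 0 ≤ η := le_trans (abs_nonneg u) hu
  have hdiff : Differentiable ℝ v := hv.differentiable one_ne_zero
  set g : ℝ → ℝ := fun y => v y - deriv v ξ * y with hg
  have key : ‖g (ξ + u) - g ξ‖ ≤ ε' * ‖(ξ + u) - ξ‖ := by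
    apply Convex.norm_image_sub_le_of_norm_hasDerivWithin_le
      (f' := fun y => deriv v y - deriv v ξ) (s := Set.Icc (ξ - η) (ξ + η))
    · intro x _
      exact ((hdiff x).hasDerivAt.sub ((hasDerivAt_id x).const_mul (deriv v ξ))).hasDerivWithinAt.congr_deriv (by ring_nf)
    · intro x hx
      rw [Real.norm_eq_abs]
      apply hcl
      rw [abs_le]
      constructor <;> [linarith [hx.1]; linarith [hx.2]]
    · exact convex_Icc _ _
    · constructor <;> linarith
    · rcases abs_le.1 hu with ⟨h1, h2⟩
      constructor <;> linarith
  simp only [hg, Real.norm_eq_abs] at key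
  have h1 : v (ξ + u) - deriv v ξ * (ξ + u) - (v ξ - deriv v ξ * ξ) = v (ξ + u) - v ξ - deriv v ξ * u := by ring
  rw [h1] at key
  have h2 : ξ + u - ξ = u := by ring
  rw [h2] at key
  exact key

set_option maxHeartbeats 1000000 in
theorem stmt_14 (a vmin r : ℝ) (ha : 0 < a) (hvmin : 0 < vmin) (hr : a / vmin < r)
    (v : ℝ → ℝ) (hv : ContDiff ℝ 1 v) (hvb : ∀ y, vmin ≤ v y)
    (δ : (ℝ → ℝ) → ℝ)
    (hδ : ∀ ψ : ℝ → ℝ, ContinuousOn ψ (Set.Icc (-r) 0) →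
      δ ψ ∈ Set.Ioo 0 r ∧ (∫ s in (-(δ ψ))..0, v (ψ s)) = a)
    (ξ : ℝ) (χ : ℝ → ℝ) (hχ : ContinuousOn χ (Set.Icc (-r) 0)) :
    Tendsto (fun h : ℝ => (δ (fun s => ξ + h * χ s) - δ (fun _ => ξ)) / h) (𝓝[≠] 0)
      (𝓝 (-(deriv v ξ / v ξ) * ∫ s in (-(a / v ξ))..0, χ s)) := by
  have hv0 : (0:ℝ) < v ξ := lt_of_lt_of_le hvmin (hvb ξ)
  have hrpos : (0:ℝ) < r := lt_trans (div_pos ha hvmin) hr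
  set v0 := v ξ with hv0def
  set d0 := a / v0 with hd0def
  have hd0pos : 0 < d0 := div_pos ha hv0
  have hd0r : d0 < r := lt_of_le_of_lt (div_le_div_of_nonneg_left ha.le hvmin (hvb ξ)) hr
  have hd0v0 : d0 * v0 = a := div_mul_cancel₀ a hv0.ne'
  -- δ of the constant function equals d0
  obtain ⟨hmem0, hint0⟩ := hδ (fun _ => ξ) continuousOn_const
  have hδc : δ (fun _ => ξ) = d0 := by
    rw [intervalIntegral.integral_const] at hint0
    simp only [sub_neg_eq_add, zero_add, smul_eq_mul] at hint0
    rw [hd0def, eq_div_iff hv0.ne']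
    exact hint0
  -- bound for χ
  obtain ⟨K0, hK0⟩ := isCompact_Icc.exists_bound_of_continuousOn hχ
  set K := max K0 1 with hKdef
  have hKpos : (0:ℝ) < K := lt_of_lt_of_le one_pos (le_max_right _ _)
  have hK : ∀ s ∈ Set.Icc (-r) (0:ℝ), |χ s| ≤ K := fun s hs =>
    le_trans (hK0 s hs) (le_max_left _ _)
  set Dξ := deriv v ξ with hDdef
  set D1 := |Dξ| + 1 with hD1def
  have hD1pos : (0:ℝ) < D1 := by positivity
  have hdc : Continuous (deriv v) := hv.continuous_deriv le_rfl
  rw [Metric.tendsto_nhdsWithin_nhds]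
  intro ε hε
  set ε' := min 1 (ε * v0 / (4 * r * K)) with hε'def
  have hε'pos : 0 < ε' := lt_min one_pos (by positivity)
  have hε'1 : ε' ≤ 1 := min_le_left _ _
  have hε'2 : ε' * (4 * r * K) ≤ ε * v0 := by
    have := min_le_right 1 (ε * v0 / (4 * r * K))
    calc ε' * (4 * r * K) ≤ (ε * v0 / (4 * r * K)) * (4 * r * K) :=
          mul_le_mul_of_nonneg_right this (by positivity)
      _ = ε * v0 := div_mul_cancel₀ _ (by positivity)
  -- continuity of deriv v at ξ
  obtain ⟨η, hηpos, hηp⟩ := Metric.continuousAt_iff.1 hdc.continuousAt ε' hε'pos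
  set η2 := η / 2 with hη2def
  have hη2pos : 0 < η2 := by positivity
  have hcl : ∀ c, |c - ξ| ≤ η2 → |deriv v c - Dξ| ≤ ε' := by
    intro c hc
    have : dist c ξ < η := by
      rw [Real.dist_eq]; linarith
    exact le_of_lt (by simpa [Real.dist_eq] using hηp this)
  have key := mvt_aux v hv ξ η2 ε' hcl
  set Δ := min (η2 / K) (ε * v0 ^ 2 / (4 * r * K ^ 2 * D1 ^ 2)) with hΔdef
  have hΔpos : 0 < Δ := lt_min (by positivity) (by positivity)
  refine ⟨Δ, hΔpos, ?_⟩
  intro h hne hdist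
  have hne0 : h ≠ 0 := hne
  rw [Real.dist_eq, sub_zero] at hdist
  have habspos : 0 < |h| := abs_pos.2 hne0
  have hhK : |h| * K ≤ η2 := by
    have h1 : |h| ≤ η2 / K := le_of_lt (lt_of_lt_of_le hdist (min_le_left _ _))
    calc |h| * K ≤ (η2 / K) * K := mul_le_mul_of_nonneg_right h1 hKpos.le
      _ = η2 := div_mul_cancel₀ _ hKpos.ne'
  have hhΔ2 : |h| * (4 * r * K ^ 2 * D1 ^ 2) ≤ ε * v0 ^ 2 := by
    have h1 : |h| ≤ ε * v0 ^ 2 / (4 * r * K ^ 2 * D1 ^ 2) :=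
      le_of_lt (lt_of_lt_of_le hdist (min_le_right _ _))
    calc |h| * (4 * r * K ^ 2 * D1 ^ 2) ≤ (ε * v0 ^ 2 / (4 * r * K ^ 2 * D1 ^ 2)) * (4 * r * K ^ 2 * D1 ^ 2) :=
          mul_le_mul_of_nonneg_right h1 (by positivity)
      _ = ε * v0 ^ 2 := div_mul_cancel₀ _ (by positivity)
  -- the perturbed function
  set ψ : ℝ → ℝ := fun s => ξ + h * χ s with hψdef
  have hψcont : ContinuousOn ψ (Set.Icc (-r) 0) :=
    continuousOn_const.add (continuousOn_const.mul hχ)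
  obtain ⟨hmemh, hinth⟩ := hδ ψ hψcont
  set dh := δ ψ with hdhdef
  have hdhpos : 0 < dh := hmemh.1
  have hdhr : dh < r := hmemh.2
  -- integrability facts
  have hsubIcc : ∀ c₁ c₂ : ℝ, c₁ ∈ Set.Icc (-r) (0:ℝ) → c₂ ∈ Set.Icc (-r) (0:ℝ) →
      Set.uIcc c₁ c₂ ⊆ Set.Icc (-r) 0 := fun c₁ c₂ h1 h2 => Set.uIcc_subset_Icc h1 h2
  have hmemdh : -dh ∈ Set.Icc (-r) (0:ℝ) := ⟨by linarith, by linarith⟩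
  have hmemd0 : -d0 ∈ Set.Icc (-r) (0:ℝ) := ⟨by linarith, by linarith⟩
  have hmem00 : (0:ℝ) ∈ Set.Icc (-r) (0:ℝ) := ⟨by linarith, le_refl _⟩
  have hIint : ∀ (f : ℝ → ℝ), ContinuousOn f (Set.Icc (-r) 0) →
      ∀ c₁ c₂ : ℝ, c₁ ∈ Set.Icc (-r) (0:ℝ) → c₂ ∈ Set.Icc (-r) (0:ℝ) →
      IntervalIntegrable f volume c₁ c₂ := by
    intro f hf c₁ c₂ h1 h2
    exact (hf.mono (hsubIcc c₁ c₂ h1 h2)).intervalIntegrable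
  have hf1cont : ContinuousOn (fun s => v (ψ s)) (Set.Icc (-r) 0) :=
    hv.continuous.comp_continuousOn hψcont
  have hecont : ContinuousOn (fun s => v (ψ s) - v0 - Dξ * (h * χ s)) (Set.Icc (-r) 0) :=
    (hf1cont.sub continuousOn_const).sub (continuousOn_const.mul (continuousOn_const.mul hχ))
  -- main integral identity
  set Ie := ∫ s in (-dh)..0, (v (ψ s) - v0 - Dξ * (h * χ s)) with hIedef
  set J := ∫ s in (-dh)..(-d0), χ s with hJdef
  set Iχ := ∫ s in (-d0)..0, χ s with hIχdef
  have hEqA : ∫ s in (-dh)..0, (v (ψ s) - v0) = a - dh * v0 := by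
    rw [intervalIntegral.integral_sub (hIint _ hf1cont _ _ hmemdh hmem00)
      (hIint _ continuousOn_const _ _ hmemdh hmem00), hinth,
      intervalIntegral.integral_const]
    simp only [sub_neg_eq_add, zero_add, smul_eq_mul]
  have hEqB : ∫ s in (-dh)..0, (v (ψ s) - v0) = Ie + Dξ * h * ∫ s in (-dh)..0, χ s := by
    rw [hIedef]
    rw [intervalIntegral.integral_sub
      ((hIint _ hf1cont _ _ hmemdh hmem00).sub (hIint _ continuousOn_const _ _ hmemdh hmem00))
      (hIint (fun s => Dξ * (h * χ s)) (continuousOn_const.mul (continuousOn_const.mul hχ)) _ _ hmemdh hmem00)]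
    have : ∫ s in (-dh)..0, Dξ * (h * χ s) = Dξ * h * ∫ s in (-dh)..0, χ s := by
      rw [← intervalIntegral.integral_const_mul]
      congr 1; ext s; ring
    rw [this]; ring
  have hEqC : ∫ s in (-dh)..0, χ s = J + Iχ :=
    (intervalIntegral.integral_add_adjacent_intervals
      (hIint _ hχ _ _ hmemdh hmemd0) (hIint _ hχ _ _ hmemd0 hmem00)).symm
  have main_eq : dh * v0 = a - (Ie + Dξ * h * (J + Iχ)) := by
    have := hEqA
    rw [hEqB, hEqC] at this
    linarith
  -- pointwise bounds
  have hptw : ∀ x ∈ Set.Icc (-r) (0:ℝ),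
      |v (ψ x) - v0 - Dξ * (h * χ x)| ≤ ε' * (|h| * K) := by
    intro x hx
    have hu : |h * χ x| ≤ |h| * K := by
      rw [abs_mul]
      exact mul_le_mul_of_nonneg_left (hK x hx) (abs_nonneg h)
    have := key (h * χ x) (le_trans hu hhK)
    calc |v (ψ x) - v0 - Dξ * (h * χ x)| = |v (ξ + h * χ x) - v ξ - Dξ * (h * χ x)| := rfl
      _ ≤ ε' * |h * χ x| := this
      _ ≤ ε' * (|h| * K) := mul_le_mul_of_nonneg_left hu hε'pos.le
  -- bound on Ie
  have hIe_bd : |Ie| ≤ ε' * (|h| * K) * r := by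
    have h1 : |Ie| ≤ ε' * (|h| * K) * |0 - (-dh)| := by
      rw [← Real.norm_eq_abs Ie]
      apply intervalIntegral.norm_integral_le_of_norm_le_const
      intro x hx
      have hx' : x ∈ Set.Icc (-r) (0:ℝ) := by
        rcases hx with ⟨hx1, hx2⟩
        constructor
        · have : min (-dh) 0 ≤ x := le_of_lt hx1
          have hmin : (-r:ℝ) ≤ min (-dh) 0 := le_min (by linarith) (by linarith)
          linarith
        · have : x ≤ max (-dh) 0 := hx2
          have hmax : max (-dh) (0:ℝ) ≤ 0 := max_le (by linarith) le_rfl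
          linarith
      exact hptw x hx'
    have h2 : |0 - (-dh)| ≤ r := by
      rw [sub_neg_eq_add, zero_add, abs_of_pos hdhpos]
      exact hdhr.le
    calc |Ie| ≤ ε' * (|h| * K) * |0 - (-dh)| := h1
      _ ≤ ε' * (|h| * K) * r := mul_le_mul_of_nonneg_left h2 (by positivity)
  -- bound on |dh - d0|
  have hdhd0 : |dh - d0| ≤ D1 * (|h| * K) * r / v0 := by
    have hfb : |a - dh * v0| ≤ D1 * (|h| * K) * r := by
      rw [← hEqA]
      have h1 : |∫ s in (-dh)..0, (v (ψ s) - v0)| ≤ D1 * (|h| * K) * |0 - (-dh)| := by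
        rw [← Real.norm_eq_abs (∫ s in (-dh)..0, (v (ψ s) - v0))]
        apply intervalIntegral.norm_integral_le_of_norm_le_const
        intro x hx
        have hx' : x ∈ Set.Icc (-r) (0:ℝ) := by
          rcases hx with ⟨hx1, hx2⟩
          constructor
          · have hmin : (-r:ℝ) ≤ min (-dh) 0 := le_min (by linarith) (by linarith)
            linarith [le_of_lt hx1]
          · have hmax : max (-dh) (0:ℝ) ≤ 0 := max_le (by linarith) le_rfl
            linarith [hx2]
        have he := hptw x hx'
        have hu : |h * χ x| ≤ |h| * K := by
          rw [abs_mul]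
          exact mul_le_mul_of_nonneg_left (hK x hx') (abs_nonneg h)
        have hDu : |Dξ * (h * χ x)| ≤ |Dξ| * (|h| * K) := by
          rw [abs_mul]
          exact mul_le_mul_of_nonneg_left hu (abs_nonneg Dξ)
        have htri : |v (ψ x) - v0| ≤ |v (ψ x) - v0 - Dξ * (h * χ x)| + |Dξ * (h * χ x)| := by
          have := abs_sub_abs_le_abs_sub (v (ψ x) - v0) (Dξ * (h * χ x))
          calc |v (ψ x) - v0| = |(v (ψ x) - v0 - Dξ * (h * χ x)) + Dξ * (h * χ x)| := by ring_nf
            _ ≤ |v (ψ x) - v0 - Dξ * (h * χ x)| + |Dξ * (h * χ x)| := abs_add_le _ _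
        rw [Real.norm_eq_abs]
        calc |v (ψ x) - v0| ≤ ε' * (|h| * K) + |Dξ| * (|h| * K) := le_trans htri (add_le_add he hDu)
          _ = (ε' + |Dξ|) * (|h| * K) := by ring
          _ ≤ D1 * (|h| * K) := by
              apply mul_le_mul_of_nonneg_right _ (by positivity)
              rw [hD1def]; linarith
      have h2 : |0 - (-dh)| ≤ r := by
        rw [sub_neg_eq_add, zero_add, abs_of_pos hdhpos]
        exact hdhr.le
      calc |∫ s in (-dh)..0, (v (ψ s) - v0)| ≤ D1 * (|h| * K) * |0 - (-dh)| := h1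
        _ ≤ D1 * (|h| * K) * r := mul_le_mul_of_nonneg_left h2 (by positivity)
    have habs : |a - dh * v0| = |dh - d0| * v0 := by
      rw [show a - dh * v0 = -((dh - d0) * v0) by rw [sub_mul, hd0v0]; ring, abs_neg, abs_mul,
        abs_of_pos hv0]
    rw [le_div_iff₀ hv0, ← habs]
    exact hfb
  -- bound on J
  have hJ_bd : |J| ≤ K * |dh - d0| := by
    have h1 : |J| ≤ K * |(-d0) - (-dh)| := by
      rw [← Real.norm_eq_abs J]
      apply intervalIntegral.norm_integral_le_of_norm_le_const
      intro x hx
      have hx' : x ∈ Set.Icc (-r) (0:ℝ) := by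
        rcases hx with ⟨hx1, hx2⟩
        constructor
        · have hmin : (-r:ℝ) ≤ min (-dh) (-d0) := le_min (by linarith) (by linarith)
          linarith [le_of_lt hx1]
        · have hmax : max (-dh) (-d0) ≤ (0:ℝ) := max_le (by linarith) (by linarith)
          linarith [hx2]
      exact hK x hx'
    have h2 : |(-d0) - (-dh)| = |dh - d0| := by
      rw [show (-d0) - (-dh) = dh - d0 by ring]
    rw [h2] at h1
    exact h1
  -- final computation
  rw [Real.dist_eq, hδc]
  have hgoal_eq : (dh - d0) / h - (-(Dξ / v0) * Iχ) = -(Ie / (v0 * h)) - (Dξ / v0) * J := by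
    have hd : dh - d0 = -(Ie + Dξ * h * (J + Iχ)) / v0 := by
      rw [eq_div_iff hv0.ne']
      linear_combination main_eq - hd0v0
    rw [hd]
    field_simp
    ring
  rw [hgoal_eq]
  have hterm1 : |Ie / (v0 * h)| ≤ ε / 4 := by
    rw [abs_div, abs_mul, abs_of_pos hv0]
    rw [div_le_iff₀ (by positivity)]
    calc |Ie| ≤ ε' * (|h| * K) * r := hIe_bd
      _ = ε' * (4 * r * K) * (|h| / 4) := by ring
      _ ≤ ε * v0 * (|h| / 4) := mul_le_mul_of_nonneg_right hε'2 (by positivity)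
      _ = ε / 4 * (v0 * |h|) := by ring
  have hterm2 : |Dξ / v0 * J| ≤ ε / 4 := by
    rw [abs_mul, abs_div, abs_of_pos hv0]
    have hJb : |J| ≤ K * (D1 * (|h| * K) * r / v0) :=
      le_trans hJ_bd (mul_le_mul_of_nonneg_left hdhd0 hKpos.le)
    have hDle : |Dξ| ≤ D1 := by rw [hD1def]; linarith
    calc |Dξ| / v0 * |J| ≤ D1 / v0 * (K * (D1 * (|h| * K) * r / v0)) := by
          apply mul_le_mul _ hJb (abs_nonneg J) (by positivity)
          gcongr
      _ = D1 ^ 2 * K ^ 2 * r * |h| / v0 ^ 2 := by field_simp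
      _ ≤ ε / 4 := by
          rw [div_le_iff₀ (by positivity)]
          calc D1 ^ 2 * K ^ 2 * r * |h| = (|h| * (4 * r * K ^ 2 * D1 ^ 2)) / 4 := by ring
            _ ≤ (ε * v0 ^ 2) / 4 := by gcongr
            _ = ε / 4 * v0 ^ 2 := by ring
  calc |(-(Ie / (v0 * h)) - Dξ / v0 * J)| ≤ |Ie / (v0 * h)| + |Dξ / v0 * J| := by
        rw [show -(Ie / (v0 * h)) - Dξ / v0 * J = -((Ie / (v0 * h)) + Dξ / v0 * J) by ring, abs_neg]
        exact abs_add_le _ _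
    _ ≤ ε / 4 + ε / 4 := add_le_add hterm1 hterm2
    _ < ε := by linarith
end
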